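/- Let R be a commutative ring, S a multiplicatively closed subset of R, M an R-module, and N a submodule of M with (N :_R M) ∩ S = ∅. Then N is an S-2-absorbing submodule of M if and only if there exists a fixed s ∈ S such that for every a, b ∈ R, either (N :_M s²ab) = (N :_M s²a) or (N :_M s²ab) = (N :_M s²b) or (N :_M s³ab) = M. -/

import Mathlib

open Pointwise

/-- `S` is a multiplicatively closed subset of `R`: `0 ∉ S`, `1 ∈ S`, closed under products. -/
def IsMCS {R : Type*} [CommRing R] (S : Set R) : Prop :=
  (0 : R) ∉ S ∧ (1 : R) ∈ S ∧ ∀ s ∈ S, ∀ t ∈ S, s * t ∈ S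

/-- `N` is an `S`-2-absorbing submodule of `M`. -/
def IsS2AbsorbingSubmodule {R M : Type*} [CommRing R] [AddCommGroup M] [Module R M]
    (S : Set R) (N : Submodule R M) : Prop :=
  (∀ s ∈ S, s ∉ N.colon ⊤) ∧
  ∃ s ∈ S, ∀ a b : R, ∀ m : M, (a * b) • m ∈ N →
    s * (a * b) ∈ N.colon ⊤ ∨ (s * a) • m ∈ N ∨ (s * b) • m ∈ N

/-- `I` is an `S`-2-absorbing ideal of `R`. -/
def IsS2AbsorbingIdeal {R : Type*} [CommRing R] (S : Set R) (I : Ideal R) : Prop :=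
  (∀ s ∈ S, s ∉ I) ∧
  ∃ s ∈ S, ∀ a b c : R, a * b * c ∈ I →
    s * (a * b) ∈ I ∨ s * (a * c) ∈ I ∨ s * (b * c) ∈ I

/-- `N` is an `S`-2-absorbing second submodule of `M`. -/
def IsS2AbsorbingSecond {R M : Type*} [CommRing R] [AddCommGroup M] [Module R M]
    (S : Set R) (N : Submodule R M) : Prop :=
  (∀ s ∈ S, s ∉ N.annihilator) ∧
  ∃ s ∈ S, ∀ a b : R, ∀ K : Submodule R M, (a * b) • N ≤ K →
    (s * a) • N ≤ K ∨ (s * b) • N ≤ K ∨ (s * (a * b)) • N = ⊥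

/-- `N` is an `S`-second submodule of `M`. -/
def IsSSecond {R M : Type*} [CommRing R] [AddCommGroup M] [Module R M]
    (S : Set R) (N : Submodule R M) : Prop :=
  (∀ s ∈ S, s ∉ N.annihilator) ∧
  ∃ s ∈ S, ∀ r : R, ∀ K : Submodule R M, r • N ≤ K →
    (r * s) • N = ⊥ ∨ s • N ≤ K

/-- `N` is a strongly 2-absorbing second submodule of `M`. -/
def IsStrongly2AbsorbingSecond {R M : Type*} [CommRing R] [AddCommGroup M] [Module R M]
    (N : Submodule R M) : Prop :=
  N ≠ ⊥ ∧ ∀ a b : R, ∀ K : Submodule R M, (a * b) • N ≤ K →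
    a • N ≤ K ∨ b • N ≤ K ∨ (a * b) • N = ⊥



private lemma sub_union_aux {R M : Type*} [CommRing R] [AddCommGroup M] [Module R M]
    (A B K : Submodule R M) (hA : A ≤ K) (hB : B ≤ K)
    (h : ∀ m ∈ K, m ∈ A ∨ m ∈ B) : K = A ∨ K = B := by
  by_cases hKA : K ≤ A
  · exact Or.inl (le_antisymm hKA hA)
  · right
    obtain ⟨x, hxK, hxA⟩ := SetLike.not_le_iff_exists.mp hKA
    have hxB : x ∈ B := (h x hxK).resolve_left hxA
    refine le_antisymm (fun m hm => ?_) hB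
    by_cases hmB : m ∈ B
    · exact hmB
    · have hmA : m ∈ A := (h m hm).resolve_right hmB
      have hmx : m + x ∈ K := K.add_mem hm hxK
      rcases h _ hmx with h1 | h1
      · exact absurd (by simpa using A.sub_mem h1 hmA) hxA
      · exact absurd (by simpa using B.sub_mem h1 hxB) hmB

theorem stmt0 {R M : Type*} [CommRing R] [AddCommGroup M] [Module R M]
    (S : Set R) (hS : IsMCS S) (N : Submodule R M)
    (hdisj : ∀ s ∈ S, s ∉ N.colon ⊤) :
    IsS2AbsorbingSubmodule S N ↔
      ∃ s ∈ S, ∀ a b : R,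
        {m : M | (s ^ 2 * (a * b)) • m ∈ N} = {m : M | (s ^ 2 * a) • m ∈ N} ∨
        {m : M | (s ^ 2 * (a * b)) • m ∈ N} = {m : M | (s ^ 2 * b) • m ∈ N} ∨
        {m : M | (s ^ 3 * (a * b)) • m ∈ N} = Set.univ := by
  constructor
  · rintro ⟨-, s, hsS, habs⟩
    refine ⟨s ^ 2, by simpa [pow_two] using hS.2.2 s hsS s hsS, fun a b => ?_⟩
    by_cases htop : ∀ m : M, ((s ^ 2) ^ 3 * (a * b)) • m ∈ N
    · exact Or.inr (Or.inr (Set.eq_univ_of_forall htop))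
    · push_neg at htop
      obtain ⟨m0, hm0⟩ := htop
      set K : Submodule R M := N.comap (LinearMap.lsmul R M ((s ^ 2) ^ 2 * (a * b))) with hK
      set A : Submodule R M := N.comap (LinearMap.lsmul R M ((s ^ 2) ^ 2 * a)) with hAdef
      set B : Submodule R M := N.comap (LinearMap.lsmul R M ((s ^ 2) ^ 2 * b)) with hBdef
      have hmemK : ∀ m : M, m ∈ K ↔ ((s ^ 2) ^ 2 * (a * b)) • m ∈ N := fun m => Iff.rfl
      have hmemA : ∀ m : M, m ∈ A ↔ ((s ^ 2) ^ 2 * a) • m ∈ N := fun m => Iff.rfl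
      have hmemB : ∀ m : M, m ∈ B ↔ ((s ^ 2) ^ 2 * b) • m ∈ N := fun m => Iff.rfl
      have hAK : A ≤ K := by
        intro m hm
        rw [hmemA] at hm
        rw [hmemK]
        have := N.smul_mem b hm
        rw [smul_smul] at this
        rwa [show (s ^ 2) ^ 2 * (a * b) = b * ((s ^ 2) ^ 2 * a) from by ring]
      have hBK : B ≤ K := by
        intro m hm
        rw [hmemB] at hm
        rw [hmemK]
        have := N.smul_mem a hm
        rw [smul_smul] at this
        rwa [show (s ^ 2) ^ 2 * (a * b) = a * ((s ^ 2) ^ 2 * b) from by ring]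
      have hsub : ∀ m ∈ K, m ∈ A ∨ m ∈ B := by
        intro m hm
        rw [hmemK] at hm
        have hm' : (s ^ 2 * a * (s ^ 2 * b)) • m ∈ N := by
          rwa [show s ^ 2 * a * (s ^ 2 * b) = (s ^ 2) ^ 2 * (a * b) from by ring]
        rcases habs (s ^ 2 * a) (s ^ 2 * b) m hm' with h1 | h1 | h1
        · exfalso
          apply hm0
          have := Submodule.mem_colon.mp h1 (s • m0) trivial
          rw [smul_smul] at this
          rwa [show s * (s ^ 2 * a * (s ^ 2 * b)) * s = (s ^ 2) ^ 3 * (a * b) from by ring] at this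
        · left
          rw [hmemA]
          have := N.smul_mem s h1
          rw [smul_smul] at this
          rwa [show s * (s * (s ^ 2 * a)) = (s ^ 2) ^ 2 * a from by ring] at this
        · right
          rw [hmemB]
          have := N.smul_mem s h1
          rw [smul_smul] at this
          rwa [show s * (s * (s ^ 2 * b)) = (s ^ 2) ^ 2 * b from by ring] at this
      rcases sub_union_aux A B K hAK hBK hsub with hEq | hEq
      · left
        ext m
        rw [Set.mem_setOf_eq, Set.mem_setOf_eq, ← hmemK m, ← hmemA m, hEq]
      · right; left
        ext m
        rw [Set.mem_setOf_eq, Set.mem_setOf_eq, ← hmemK m, ← hmemB m, hEq]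
  · rintro ⟨s, hsS, hprop⟩
    refine ⟨hdisj, s ^ 3, ?_, fun a b m habm => ?_⟩
    · have h2 := hS.2.2 s hsS s hsS
      simpa [pow_succ, pow_two, mul_assoc] using hS.2.2 s hsS _ h2
    · rcases hprop a b with h | h | h
      · right; left
        have hmem : m ∈ {m : M | (s ^ 2 * (a * b)) • m ∈ N} := by
          have := N.smul_mem (s ^ 2) habm
          rwa [smul_smul] at this
        rw [h] at hmem
        have : s • (s ^ 2 * a) • m ∈ N := N.smul_mem s hmem
        rw [smul_smul] at this
        rwa [show s * (s ^ 2 * a) = s ^ 3 * a from by ring] at this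
      · right; right
        have hmem : m ∈ {m : M | (s ^ 2 * (a * b)) • m ∈ N} := by
          have := N.smul_mem (s ^ 2) habm
          rwa [smul_smul] at this
        rw [h] at hmem
        have : s • (s ^ 2 * b) • m ∈ N := N.smul_mem s hmem
        rw [smul_smul] at this
        rwa [show s * (s ^ 2 * b) = s ^ 3 * b from by ring] at this
      · left
        rw [Submodule.mem_colon]
        intro p _
        have : p ∈ {m : M | (s ^ 3 * (a * b)) • m ∈ N} := h ▸ Set.mem_univ p
        exact this
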